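/- Let ε⁽¹⁾, ..., ε⁽ⁿ⁾ be positive reals taking at most m distinct values, with harmonic number H_n = Σ_{k=1}^n 1/k. Set s = Σⱼ ε⁽ʲ⁾ and q = Σⱼ (ε⁽ʲ⁾)². Then there exists ε* > 0 with n* := |{j : ε⁽ʲ⁾ ≥ ε*}| ≥ 1 such that 1/(4n*) + 2/(ε*·n*)² ≤ min(m², H_n²) · (q/(4s²) + 2/s²). -/

import Mathlib

open Finset

lemma sum_Icc_one_div (n : ℕ) :
    ∑ k ∈ Finset.Icc 1 n, (1 : ℝ) / k = ∑ k ∈ Finset.range n, (1 : ℝ) / (k + 1) := by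
  induction n with
  | zero => simp
  | succ n ih =>
    rw [Finset.sum_Icc_succ_top (Nat.one_le_iff_ne_zero.mpr (Nat.succ_ne_zero n)),
      Finset.sum_range_succ, ih]
    push_cast
    ring

theorem threshold_vs_affine_comparison (n m : ℕ) (hn : 0 < n) (ε : Fin n → ℝ)
    (hpos : ∀ j, 0 < ε j) (hdistinct : (Finset.univ.image ε).card ≤ m) :
    let Hn : ℝ := ∑ k ∈ Finset.range n, (1 : ℝ) / (k + 1)
    let s : ℝ := ∑ j, ε j
    let q : ℝ := ∑ j, (ε j) ^ 2
    ∃ εstar : ℝ, 0 < εstar ∧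
      0 < (Finset.univ.filter fun j => εstar ≤ ε j).card ∧
      1 / (4 * ((Finset.univ.filter fun j => εstar ≤ ε j).card : ℝ))
        + 2 / (εstar * ((Finset.univ.filter fun j => εstar ≤ ε j).card : ℝ)) ^ 2
      ≤ min ((m : ℝ) ^ 2) (Hn ^ 2) * (q / (4 * s ^ 2) + 2 / s ^ 2) := by
  intro Hn s q
  classical
  have hne : Nonempty (Fin n) := ⟨⟨0, hn⟩⟩
  -- nonempty image
  have himg : (Finset.univ.image ε).Nonempty :=
    ⟨ε ⟨0, hn⟩, Finset.mem_image_of_mem ε (Finset.mem_univ _)⟩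
  -- the counting function
  set N : ℝ → ℕ := fun v => (Finset.univ.filter fun j => v ≤ ε j).card with hNdef
  obtain ⟨εstar, hεmem, hmax⟩ :=
    Finset.exists_max_image (Finset.univ.image ε) (fun v => v * (N v : ℝ)) himg
  obtain ⟨j0, -, hj0⟩ := Finset.mem_image.mp hεmem
  have hεpos : 0 < εstar := hj0 ▸ hpos j0
  have hj0mem : j0 ∈ Finset.univ.filter fun j => εstar ≤ ε j := by
    simp [hj0.ge]
  have hcard : 0 < (Finset.univ.filter fun j => εstar ≤ ε j).card :=
    Finset.card_pos.mpr ⟨j0, hj0mem⟩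
  refine ⟨εstar, hεpos, hcard, ?_⟩
  set c : ℝ := ((Finset.univ.filter fun j => εstar ≤ ε j).card : ℝ) with hc
  have hcpos : 0 < c := by rw [hc]; exact_mod_cast hcard
  set M : ℝ := εstar * c with hM
  have hMpos : 0 < M := mul_pos hεpos hcpos
  -- positivity of everything
  have hspos : 0 < s := Finset.sum_pos (fun j _ => hpos j) Finset.univ_nonempty
  have hHnpos : 0 < Hn := by
    apply Finset.sum_pos (fun k _ => by positivity)
    exact ⟨0, Finset.mem_range.mpr hn⟩
  -- q lower bound
  have hq : c * εstar ^ 2 ≤ q := by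
    have h1 : ∑ j ∈ Finset.univ.filter (fun j => εstar ≤ ε j), εstar ^ 2
        ≤ ∑ j ∈ Finset.univ.filter (fun j => εstar ≤ ε j), ε j ^ 2 := by
      apply Finset.sum_le_sum
      intro j hj
      have := (Finset.mem_filter.mp hj).2
      exact pow_le_pow_left₀ hεpos.le this 2
    have h2 : ∑ j ∈ Finset.univ.filter (fun j => εstar ≤ ε j), ε j ^ 2 ≤ q :=
      Finset.sum_le_sum_of_subset_of_nonneg (Finset.filter_subset _ _)
        (fun j _ _ => sq_nonneg _)
    calc c * εstar ^ 2
        = ∑ j ∈ Finset.univ.filter (fun j => εstar ≤ ε j), εstar ^ 2 := by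
          rw [Finset.sum_const, nsmul_eq_mul]
      _ ≤ q := h1.trans h2
  -- s ≤ m * M : group by fibers
  have hs_m : s ≤ (m : ℝ) * M := by
    have hfib : s = ∑ v ∈ Finset.univ.image ε,
        ∑ j ∈ Finset.univ.filter (fun j => ε j = v), ε j := by
      rw [Finset.sum_fiberwise_of_maps_to (fun j _ => Finset.mem_image_of_mem ε (Finset.mem_univ j))]
    rw [hfib]
    have hstep : ∀ v ∈ Finset.univ.image ε,
        ∑ j ∈ Finset.univ.filter (fun j => ε j = v), ε j ≤ M := by
      intro v hv
      obtain ⟨i0, -, hi0⟩ := Finset.mem_image.mp hv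
      have hvpos : 0 < v := hi0 ▸ hpos i0
      have hsum : ∑ j ∈ Finset.univ.filter (fun j => ε j = v), ε j
          = ((Finset.univ.filter (fun j => ε j = v)).card : ℝ) * v := by
        rw [Finset.sum_congr rfl (fun j hj => (Finset.mem_filter.mp hj).2),
          Finset.sum_const, nsmul_eq_mul]
      have hsub : (Finset.univ.filter (fun j => ε j = v)) ⊆
          (Finset.univ.filter (fun j => v ≤ ε j)) := by
        intro j hj
        simp only [Finset.mem_filter, Finset.mem_univ, true_and] at hj ⊢
        exact hj.ge
      have hcardle : ((Finset.univ.filter (fun j => ε j = v)).card : ℝ) ≤ (N v : ℝ) := by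
        exact_mod_cast Finset.card_le_card hsub
      calc ∑ j ∈ Finset.univ.filter (fun j => ε j = v), ε j
          = ((Finset.univ.filter (fun j => ε j = v)).card : ℝ) * v := hsum
        _ ≤ (N v : ℝ) * v := by
            exact mul_le_mul_of_nonneg_right hcardle hvpos.le
        _ = v * (N v : ℝ) := mul_comm _ _
        _ ≤ M := hmax v hv
    calc ∑ v ∈ Finset.univ.image ε, ∑ j ∈ Finset.univ.filter (fun j => ε j = v), ε j
        ≤ ∑ _v ∈ Finset.univ.image ε, M := Finset.sum_le_sum hstep
      _ = ((Finset.univ.image ε).card : ℝ) * M := by rw [Finset.sum_const, nsmul_eq_mul]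
      _ ≤ (m : ℝ) * M := by
          apply mul_le_mul_of_nonneg_right _ hMpos.le
          exact_mod_cast hdistinct
  -- ranking function
  set key : Fin n → Lex (ℝ × Fin n) := fun i => toLex (ε i, i) with hkey
  set rank : Fin n → ℕ := fun j => (Finset.univ.filter fun i => key j ≤ key i).card with hrank
  have hkey_inj : Function.Injective key := by
    intro a b h
    have : (ofLex (key a)).2 = (ofLex (key b)).2 := by rw [h]
    simpa [hkey] using this
  have hrank_lt : ∀ a b, key a < key b → rank b < rank a := by
    intro a b hab
    apply Finset.card_lt_card
    rw [Finset.ssubset_iff_of_subset]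
    · refine ⟨a, ?_, ?_⟩
      · simp
      · simp only [Finset.mem_filter, Finset.mem_univ, true_and]
        exact not_le.mpr hab
    · intro i hi
      simp only [Finset.mem_filter, Finset.mem_univ, true_and] at hi ⊢
      exact hab.le.trans hi
  have hrank_inj : Function.Injective rank := by
    intro a b h
    by_contra hne
    have hkne : key a ≠ key b := fun hk => hne (hkey_inj hk)
    rcases hkne.lt_or_gt with h1 | h1
    · exact absurd h (hrank_lt a b h1).ne'
    · exact absurd h (hrank_lt b a h1).ne
  have hrank_pos : ∀ j, 0 < rank j := by
    intro j
    apply Finset.card_pos.mpr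
    exact ⟨j, by simp⟩
  have hrank_le : ∀ j, rank j ≤ n := by
    intro j
    calc rank j ≤ Finset.univ.card := Finset.card_filter_le _ _
      _ = n := by simp
  -- sum of 1/rank bounded by Hn
  have hsum_rank : ∑ j, (1 : ℝ) / (rank j : ℝ) ≤ Hn := by
    have himg_eq : ∑ k ∈ Finset.univ.image rank, (1 : ℝ) / (k : ℝ)
        = ∑ j, (1 : ℝ) / (rank j : ℝ) :=
      Finset.sum_image (fun a _ b _ h => hrank_inj h)
    rw [← himg_eq]
    have hsub : Finset.univ.image rank ⊆ Finset.Icc 1 n := by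
      intro k hk
      obtain ⟨j, -, hj⟩ := Finset.mem_image.mp hk
      rw [Finset.mem_Icc]
      exact ⟨hj ▸ hrank_pos j, hj ▸ hrank_le j⟩
    calc ∑ k ∈ Finset.univ.image rank, (1 : ℝ) / (k : ℝ)
        ≤ ∑ k ∈ Finset.Icc 1 n, (1 : ℝ) / (k : ℝ) :=
          Finset.sum_le_sum_of_subset_of_nonneg hsub (fun k _ _ => by positivity)
      _ = Hn := sum_Icc_one_div n
  -- per-element bound : ε j * rank j ≤ M
  have hj_bound : ∀ j, ε j * (rank j : ℝ) ≤ M := by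
    intro j
    have h1 : rank j ≤ N (ε j) := by
      apply Finset.card_le_card
      intro i hi
      simp only [Finset.mem_filter, Finset.mem_univ, true_and] at hi ⊢
      rcases Prod.Lex.le_iff.mp hi with h | h
      · exact h.le
      · exact h.1.le
    have h2 : ε j * (N (ε j) : ℝ) ≤ M :=
      hmax (ε j) (Finset.mem_image_of_mem ε (Finset.mem_univ j))
    calc ε j * (rank j : ℝ) ≤ ε j * (N (ε j) : ℝ) := by
          apply mul_le_mul_of_nonneg_left _ (hpos j).le
          exact_mod_cast h1
      _ ≤ M := h2
  -- s ≤ Hn * M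
  have hs_H : s ≤ Hn * M := by
    have h1 : s ≤ ∑ j, M / (rank j : ℝ) := by
      apply Finset.sum_le_sum
      intro j _
      rw [le_div_iff₀ (by exact_mod_cast hrank_pos j)]
      exact hj_bound j
    have h2 : ∑ j, M / (rank j : ℝ) = M * ∑ j, (1 : ℝ) / (rank j : ℝ) := by
      rw [Finset.mul_sum]
      congr 1
      ext j
      ring
    calc s ≤ M * ∑ j, (1 : ℝ) / (rank j : ℝ) := h2 ▸ h1
      _ ≤ M * Hn := mul_le_mul_of_nonneg_left hsum_rank hMpos.le
      _ = Hn * M := mul_comm _ _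
  -- combine
  set A : ℝ := min (m : ℝ) Hn with hA
  have hm1 : 0 < m := lt_of_lt_of_le (Finset.card_pos.mpr himg) hdistinct
  have hmpos : (0 : ℝ) < m := by exact_mod_cast hm1
  have hApos : 0 < A := lt_min hmpos hHnpos
  have hsA : s ≤ A * M := by
    rcases le_total (m : ℝ) Hn with h | h
    · rw [hA, min_eq_left h]; exact hs_m
    · rw [hA, min_eq_right h]; exact hs_H
  have hmin_eq : min ((m : ℝ) ^ 2) (Hn ^ 2) = A ^ 2 := by
    rcases le_total (m : ℝ) Hn with h | h
    · rw [min_eq_left (pow_le_pow_left₀ hmpos.le h 2), hA, min_eq_left h]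
    · rw [min_eq_right (pow_le_pow_left₀ hHnpos.le h 2), hA, min_eq_right h]
  have hs2 : s ^ 2 ≤ A ^ 2 * (εstar * c) ^ 2 := by
    have h1 : s ^ 2 ≤ (A * M) ^ 2 := pow_le_pow_left₀ hspos.le hsA 2
    calc s ^ 2 ≤ (A * M) ^ 2 := h1
      _ = A ^ 2 * (εstar * c) ^ 2 := by rw [hM]; ring
  have h1 : 1 / (4 * c) ≤ A ^ 2 * q / (4 * s ^ 2) := by
    rw [div_le_div_iff₀ (by positivity) (by positivity)]
    have hq' : A ^ 2 * c * (c * εstar ^ 2) ≤ A ^ 2 * c * q :=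
      mul_le_mul_of_nonneg_left hq (by positivity)
    nlinarith [hs2]
  have h2 : 2 / (εstar * c) ^ 2 ≤ A ^ 2 * 2 / s ^ 2 := by
    rw [div_le_div_iff₀ (by positivity) (by positivity)]
    nlinarith [hs2]
  rw [hmin_eq]
  calc 1 / (4 * c) + 2 / (εstar * c) ^ 2
      ≤ A ^ 2 * q / (4 * s ^ 2) + A ^ 2 * 2 / s ^ 2 := add_le_add h1 h2
    _ = A ^ 2 * (q / (4 * s ^ 2) + 2 / s ^ 2) := by ring
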